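/- Let I be a compact interval in R and let phi be a smooth (C^infinity) real-valued function on I. Denote by E the zero set of phi and by {I_k}_k the connected component intervals of I \ E. Then for every epsilon > 0 the series sum_k (sup_{I_k} |phi|)^{epsilon} converges. -/

import Mathlib

open MeasureTheory Set
open scoped ENNReal

noncomputable section


/-- Chained Rolle bound: if `F j` is a derivative chain on `[a,b]`, `|F n| ≤ B`,
and `F 0` has `n` distinct zeros in `[u,v] ⊆ [a,b]`, then `|F 0| ≤ (v-u)^n * B` on `[u,v]`. -/
lemma sjolin_key (a b : ℝ) : ∀ (n : ℕ) (F : ℕ → ℝ → ℝ),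
    (∀ j, j ≤ n → ContinuousOn (F j) (Icc a b)) →
    (∀ j, j < n → ∀ x ∈ Ioo a b, HasDerivAt (F j) (F (j+1) x) x) →
    ∀ (B : ℝ), 0 ≤ B → (∀ x ∈ Icc a b, |F n x| ≤ B) →
    ∀ (u v : ℝ), Icc u v ⊆ Icc a b →
    ∀ (z : Fin n → ℝ), StrictMono z → (∀ i, z i ∈ Icc u v) → (∀ i, F 0 (z i) = 0) →
    ∀ x ∈ Icc u v, |F 0 x| ≤ (v - u) ^ n * B := by
  intro n
  induction n with
  | zero =>
    intro F hc hd B hB hFB u v huv z hz hzs hz0 x hx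
    simpa using hFB x (huv hx)
  | succ n IH =>
    intro F hc hd B hB hFB u v huv z hz hzs hz0 x hx
    have huv' : u ≤ v := hx.1.trans hx.2
    have hvu : (0:ℝ) ≤ v - u := sub_nonneg.2 huv'
    -- construct zeros of F 1 by Rolle
    have hIccsub : ∀ (p q : ℝ), p ∈ Icc u v → q ∈ Icc u v → Icc p q ⊆ Icc a b := by
      intro p q hp hq
      intro y hy
      exact ⟨(huv hp).1.trans hy.1, hy.2.trans (huv hq).2⟩
    have hIoosub : ∀ (p q : ℝ), p ∈ Icc u v → q ∈ Icc u v → Ioo p q ⊆ Ioo a b := by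
      intro p q hp hq y hy
      exact ⟨lt_of_le_of_lt (huv hp).1 hy.1, lt_of_lt_of_le hy.2 (huv hq).2⟩
    have hrolle : ∀ i : Fin n, ∃ c ∈ Ioo (z i.castSucc) (z i.succ), F 1 c = 0 := by
      intro i
      have hlt : z i.castSucc < z i.succ := hz (Fin.castSucc_lt_succ (i := i))
      exact exists_hasDerivAt_eq_zero hlt
        ((hc 0 (Nat.zero_le _)).mono (hIccsub _ _ (hzs _) (hzs _)))
        (by rw [hz0, hz0])
        (fun y hy => hd 0 (Nat.succ_pos n) y (hIoosub _ _ (hzs _) (hzs _) hy))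
    choose w hw hw0 using hrolle
    have hwmem : ∀ i, w i ∈ Icc u v := fun i =>
      ⟨(hzs i.castSucc).1.trans (hw i).1.le, (hw i).2.le.trans (hzs i.succ).2⟩
    have hwmono : StrictMono w := by
      intro i j hij
      calc w i < z i.succ := (hw i).2
        _ ≤ z j.castSucc := hz.monotone (by
            rw [Fin.le_def]
            simp only [Fin.val_succ, Fin.coe_castSucc]
            exact hij)
        _ < w j := (hw j).1
    have hF1 : ∀ y ∈ Icc u v, |F 1 y| ≤ (v - u) ^ n * B := by
      refine IH (fun j => F (j+1)) (fun j hj => hc (j+1) (Nat.succ_le_succ hj))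
        (fun j hj y hy => hd (j+1) (Nat.succ_lt_succ hj) y hy) B hB
        (fun y hy => hFB y hy) u v huv w hwmono hwmem hw0
    -- MVT from the zero z 0
    set z0 := z 0 with hz0def
    have hz0mem : z0 ∈ Icc u v := hzs 0
    have hz0val : F 0 z0 = 0 := hz0 0
    have hgoal : ∀ (p q : ℝ), p < q → p ∈ Icc u v → q ∈ Icc u v → F 0 p = 0 ∨ F 0 q = 0 →
        (|F 0 p| ≤ (v-u)^(n+1) * B ∧ |F 0 q| ≤ (v-u)^(n+1) * B) := by
      intro p q hpq hp hq h0
      obtain ⟨c, hc1, hc2⟩ := exists_hasDerivAt_eq_slope (F 0) (F 1) hpq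
        ((hc 0 (Nat.zero_le _)).mono (hIccsub _ _ hp hq))
        (fun y hy => hd 0 (Nat.succ_pos n) y (hIoosub _ _ hp hq hy))
      have hcm : c ∈ Icc u v := ⟨hp.1.trans hc1.1.le, hc1.2.le.trans hq.2⟩
      have hbound : |F 0 q - F 0 p| ≤ (v-u)^(n+1) * B := by
        have h1 : F 0 q - F 0 p = F 1 c * (q - p) := by
          rw [hc2, div_mul_cancel₀]
          exact sub_ne_zero.2 hpq.ne'
        rw [h1, abs_mul]
        have h2 : |F 1 c| ≤ (v-u)^n * B := hF1 c hcm
        have h3 : |q - p| ≤ v - u := by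
          rw [abs_of_nonneg (by linarith)]
          linarith [hp.1, hq.2]
        calc |F 1 c| * |q - p| ≤ ((v-u)^n * B) * (v - u) :=
              mul_le_mul h2 h3 (abs_nonneg _) (by positivity)
          _ = (v-u)^(n+1) * B := by ring
      rcases h0 with h0 | h0
      · refine ⟨by rw [h0]; simpa using by positivity, ?_⟩
        calc |F 0 q| = |F 0 q - F 0 p| := by rw [h0, sub_zero]
          _ ≤ _ := hbound
      · refine ⟨?_, by rw [h0]; simpa using by positivity⟩
        calc |F 0 p| = |F 0 q - F 0 p| := by rw [h0, zero_sub, abs_neg]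
          _ ≤ _ := hbound
    rcases lt_trichotomy x z0 with h | h | h
    · exact ((hgoal x z0 h hx hz0mem (Or.inr hz0val)).1)
    · rw [h, hz0val]
      simp only [abs_zero]
      positivity
    · exact ((hgoal z0 x h hz0mem hx (Or.inl hz0val)).2)


def SjGood (a b : ℝ) (φ : ℝ → ℝ) (n : ℕ) (C : Set ℝ) (δ : ℝ) : Prop :=
  ∃ u v : ℝ, u ≤ v ∧ v - u ≤ δ ∧ Set.Icc u v ⊆ Set.Icc a b ∧ C ⊆ Set.Icc u v ∧
    ∃ z : Fin n → ℝ, StrictMono z ∧ (∀ i, z i ∈ Set.Icc u v) ∧ ∀ i, φ (z i) = 0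

lemma sjolin_count (a b : ℝ) (φ : ℝ → ℝ) (n : ℕ) (δ : ℝ) (hδ : 0 < δ)
    (S : Set ℝ) (hSdef : S = Set.Icc a b \ {y | φ y = 0})
    (G : Finset {C : Set ℝ // ∃ x ∈ S, C = connectedComponentIn S x})
    (hbad : ∀ c ∈ G, ¬ SjGood a b φ n (c : Set ℝ) δ) :
    G.card ≤ (n + 2) * (⌊3 * (b - a) / δ⌋₊ + 1) := by
  classical
  have hS_Icc : S ⊆ Set.Icc a b := by rw [hSdef]; exact Set.diff_subset
  have hS_mem : ∀ {y : ℝ}, y ∈ Set.Icc a b → φ y ≠ 0 → y ∈ S := by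
    intro y h1 h2; rw [hSdef]; exact ⟨h1, h2⟩
  have hS_ne : ∀ {y : ℝ}, y ∈ S → φ y ≠ 0 := by
    intro y hy
    rw [hSdef] at hy
    exact hy.2
  have hS_zero : ∀ {y : ℝ}, y ∈ Set.Icc a b → y ∉ S → φ y = 0 := by
    intro y h1 h2
    by_contra h
    exact h2 (hS_mem h1 h)
  choose rep hrepS hrepC using
    fun c : {C : Set ℝ // ∃ x ∈ S, C = connectedComponentIn S x} => c.2
  have hrepinj : Function.Injective rep := fun c c' h =>
    Subtype.ext (by rw [hrepC c, hrepC c', h])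
  set w := δ / 3 with hw
  have hw0 : 0 < w := by rw [hw]; linarith
  set κ := fun c : {C : Set ℝ // ∃ x ∈ S, C = connectedComponentIn S x} =>
    ⌊(rep c - a) / w⌋₊ with hκ
  have hmemIcc : ∀ c, rep c ∈ Set.Icc a b := fun c => hS_Icc (hrepS c)
  -- fiber bound
  have hfiber : ∀ k, (G.filter (fun c => κ c = k)).card ≤ n + 2 := by
    intro k
    by_contra hgt
    push_neg at hgt
    obtain ⟨t, hts, htcard⟩ := Finset.exists_subset_card_eq
      (show n+3 ≤ (G.filter (fun c => κ c = k)).card by omega)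
    set T := t.image rep with hT
    have hTcard : T.card = n + 3 := by
      rw [hT, Finset.card_image_of_injective _ hrepinj, htcard]
    set x : Fin (n+3) → ℝ := fun i => (T.orderIsoOfFin hTcard i : ℝ) with hx
    have hxmono : StrictMono x := fun i j hij =>
      Subtype.coe_lt_coe.2 ((T.orderIsoOfFin hTcard).lt_iff_lt.2 hij)
    have hxT : ∀ i, x i ∈ T := fun i => (T.orderIsoOfFin hTcard i).2
    choose cc hcct hccx using fun i => Finset.mem_image.1 (hxT i)
    have hccG : ∀ i, cc i ∈ G := fun i => (Finset.mem_filter.1 (hts (hcct i))).1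
    have hccκ : ∀ i, κ (cc i) = k := fun i => (Finset.mem_filter.1 (hts (hcct i))).2
    have hxS : ∀ i, x i ∈ S := fun i => hccx i ▸ hrepS (cc i)
    have hxIcc : ∀ i, x i ∈ Set.Icc a b := fun i => hS_Icc (hxS i)
    have hcompne : ∀ i j : Fin (n+3), i ≠ j →
        connectedComponentIn S (x i) ≠ connectedComponentIn S (x j) := by
      intro i j hij hconeq
      apply hij
      have hc1 : (cc i : Set ℝ) = (cc j : Set ℝ) := by
        rw [hrepC (cc i), hrepC (cc j), hccx i, hccx j, hconeq]
      have hc2 : cc i = cc j := Subtype.ext hc1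
      apply hxmono.injective
      rw [← hccx i, ← hccx j, hc2]
    -- cell bounds
    have hcell : ∀ i, (k : ℝ) * w ≤ x i - a ∧ x i - a < ((k : ℝ) + 1) * w := by
      intro i
      have hge : (0:ℝ) ≤ x i - a := by linarith [(hxIcc i).1]
      have h0 : 0 ≤ (x i - a) / w := div_nonneg hge hw0.le
      have hfl : ⌊(x i - a) / w⌋₊ = k := by
        have h := hccκ i
        simp only [hκ] at h
        rwa [hccx i] at h
      have h1 := (Nat.floor_eq_iff h0).1 hfl
      constructor
      · exact (le_div_iff₀ hw0).1 h1.1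
      · exact (div_lt_iff₀ hw0).1 h1.2
    have hdiam : x (Fin.last (n+2)) - x 0 < w := by
      have h1 := (hcell (Fin.last (n+2))).2
      have h2 := (hcell 0).1
      linarith
    -- separating zeros
    have hsep : ∀ i : Fin (n+2), ∃ e, e ∈ Set.Ioo (x i.castSucc) (x i.succ) ∧ φ e = 0 := by
      intro i
      have hlt : x i.castSucc < x i.succ := hxmono (Fin.castSucc_lt_succ (i := i))
      have hex : ∃ e ∈ Set.Icc (x i.castSucc) (x i.succ), e ∉ S := by
        by_contra hcon
        push_neg at hcon
        have hsub : Set.Icc (x i.castSucc) (x i.succ) ⊆ S := fun y hy => hcon y hy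
        have h1 : Set.Icc (x i.castSucc) (x i.succ) ⊆ connectedComponentIn S (x i.castSucc) :=
          isPreconnected_Icc.subset_connectedComponentIn (Set.left_mem_Icc.2 hlt.le) hsub
        have h2 : x i.succ ∈ connectedComponentIn S (x i.castSucc) :=
          h1 (Set.right_mem_Icc.2 hlt.le)
        exact hcompne _ _ (Fin.castSucc_lt_succ (i := i)).ne (connectedComponentIn_eq h2)
      obtain ⟨e, he1, he2⟩ := hex
      have heIcc : e ∈ Set.Icc a b :=
        ⟨(hxIcc i.castSucc).1.trans he1.1, he1.2.trans (hxIcc i.succ).2⟩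
      have heφ : φ e = 0 := hS_zero heIcc he2
      have hne1 : e ≠ x i.castSucc := fun h => he2 (h ▸ hxS i.castSucc)
      have hne2 : e ≠ x i.succ := fun h => he2 (h ▸ hxS i.succ)
      exact ⟨e, ⟨lt_of_le_of_ne he1.1 (Ne.symm hne1), lt_of_le_of_ne he1.2 hne2⟩, heφ⟩
    choose e he heφ using hsep
    have hemono : StrictMono e := by
      intro i j hij
      calc e i < x i.succ := (he i).2
        _ ≤ x j.castSucc := hxmono.monotone (by
            rw [Fin.le_def]
            simp only [Fin.val_succ, Fin.coe_castSucc]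
            exact hij)
        _ < e j := (he j).1
    -- the middle component is Good : contradiction
    set i1 : Fin (n+3) := (0 : Fin (n+2)).succ with hi1
    have hC0 : (0 : Fin (n+2)).castSucc = (0 : Fin (n+3)) := by
      ext; simp
    have hCbad : ¬ SjGood a b φ n ((cc i1 : Set ℝ)) δ := hbad _ (hccG i1)
    apply hCbad
    have hCeq : (cc i1 : Set ℝ) = connectedComponentIn S (x i1) := by
      rw [hrepC (cc i1), hccx i1]
    refine ⟨e 0, e (Fin.last (n+1)), ?_, ?_, ?_, ?_, ?_⟩
    · exact hemono.monotone (Fin.zero_le _)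
    · have h1 : e (Fin.last (n+1)) < x (Fin.last (n+2)) := by
        have := (he (Fin.last (n+1))).2
        rwa [Fin.succ_last] at this
      have h2 : x 0 < e 0 := by
        have := (he 0).1
        rwa [hC0] at this
      rw [hw] at hdiam
      linarith
    · apply Set.Icc_subset_Icc
      · have := (he 0).1
        rw [hC0] at this
        linarith [(hxIcc 0).1]
      · have := (he (Fin.last (n+1))).2
        rw [Fin.succ_last] at this
        linarith [(hxIcc (Fin.last (n+2))).2]
    · -- component inside [e 0, e last]
      rw [hCeq]
      intro y hy
      have hC_S : connectedComponentIn S (x i1) ⊆ S := connectedComponentIn_subset _ _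
      have hCord : Set.OrdConnected (connectedComponentIn S (x i1)) :=
        (isPreconnected_connectedComponentIn).ordConnected
      have hx1C : x i1 ∈ connectedComponentIn S (x i1) :=
        mem_connectedComponentIn (hxS i1)
      constructor
      · by_contra hlt'
        push_neg at hlt'
        have hmem : e 0 ∈ Set.Icc y (x i1) := by
          refine ⟨hlt'.le, ?_⟩
          exact (he 0).2.le
        have : e 0 ∈ connectedComponentIn S (x i1) := hCord.out hy hx1C hmem
        exact hS_ne (hC_S this) (heφ 0)
      · by_contra hlt'
        push_neg at hlt'
        have hle : x i1 ≤ e (Fin.last (n+1)) := by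
          have h1 : x i1 ≤ x ((Fin.last (n+1)).castSucc) := by
            apply hxmono.monotone
            rw [Fin.le_def]
            simp [hi1]
          exact h1.trans (he (Fin.last (n+1))).1.le
        have hmem : e (Fin.last (n+1)) ∈ Set.Icc (x i1) y := ⟨hle, hlt'.le⟩
        have : e (Fin.last (n+1)) ∈ connectedComponentIn S (x i1) := hCord.out hx1C hy hmem
        exact hS_ne (hC_S this) (heφ (Fin.last (n+1)))
    · refine ⟨fun i : Fin n => e ⟨i.val + 1, by omega⟩, ?_, ?_, ?_⟩
      · intro i j hij
        apply hemono
        rw [Fin.lt_def]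
        simpa using hij
      · intro i
        constructor
        · apply hemono.monotone
          rw [Fin.le_def]
          simp
        · apply hemono.monotone
          rw [Fin.le_def]
          simp [Fin.last]
      · intro i
        exact heφ _
  -- total count
  have himg : ∀ c ∈ G, κ c ∈ Finset.range (⌊3 * (b - a) / δ⌋₊ + 1) := by
    intro c _
    rw [Finset.mem_range, Nat.lt_succ_iff]
    simp only [hκ]
    apply Nat.floor_le_floor
    have hba : rep c - a ≤ b - a := by linarith [(hmemIcc c).2]
    have h1 : (rep c - a) / w ≤ (b - a) / w := by
      gcongr
    have h2 : (b - a) / w = 3 * (b - a) / δ := by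
      rw [hw]
      field_simp
    rw [h2] at h1
    exact h1
  calc G.card = ∑ k ∈ G.image κ, (G.filter fun c => κ c = k).card :=
        Finset.card_eq_sum_card_image κ G
    _ ≤ ∑ _k ∈ G.image κ, (n + 2) := Finset.sum_le_sum fun k _ => hfiber k
    _ = (G.image κ).card * (n + 2) := by rw [Finset.sum_const, smul_eq_mul]
    _ ≤ (⌊3 * (b - a) / δ⌋₊ + 1) * (n + 2) := by
        apply Nat.mul_le_mul_right
        calc (G.image κ).card ≤ (Finset.range (⌊3 * (b - a) / δ⌋₊ + 1)).card := by
              apply Finset.card_le_card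
              intro k hk
              obtain ⟨c, hc, rfl⟩ := Finset.mem_image.1 hk
              exact himg c hc
          _ = ⌊3 * (b - a) / δ⌋₊ + 1 := Finset.card_range _
    _ = (n + 2) * (⌊3 * (b - a) / δ⌋₊ + 1) := Nat.mul_comm _ _

theorem sjolin_main (a b : ℝ) (hab : a < b) (φ : ℝ → ℝ)
    (hφ : ContDiffOn ℝ (⊤ : ℕ∞) φ (Set.Icc a b)) (ε : ℝ) (hε : 0 < ε) :
    Summable (fun Cc : {C : Set ℝ // ∃ x ∈ Set.Icc a b \ {y | φ y = 0},
        C = connectedComponentIn (Set.Icc a b \ {y | φ y = 0}) x} =>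
      (sSup ((fun x => |φ x|) '' (Cc : Set ℝ))) ^ ε) := by
  classical
  set S := Set.Icc a b \ {y | φ y = 0} with hSdef
  -- choose n
  set n : ℕ := ⌈2 / ε⌉₊ with hn
  have hn2 : 2 ≤ (n : ℝ) * ε := by
    have h1 : 2 / ε ≤ (n : ℝ) := Nat.le_ceil _
    calc (2:ℝ) = (2/ε) * ε := by field_simp
      _ ≤ (n : ℝ) * ε := by
          apply mul_le_mul_of_nonneg_right h1 hε.le
  -- derivative chain
  set F : ℕ → ℝ → ℝ := fun j => iteratedDerivWithin j φ (Set.Icc a b) with hF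
  have hune : UniqueDiffOn ℝ (Set.Icc a b) := uniqueDiffOn_Icc hab
  have hcont : ∀ j, j ≤ n → ContinuousOn (F j) (Set.Icc a b) := fun j _ =>
    hφ.continuousOn_iteratedDerivWithin (by exact_mod_cast le_top) hune
  have hderiv : ∀ j, j < n → ∀ x ∈ Set.Ioo a b, HasDerivAt (F j) (F (j+1) x) x := by
    intro j _ x hx
    have hxIcc : x ∈ Set.Icc a b := Ioo_subset_Icc_self hx
    have hdiff : DifferentiableWithinAt ℝ (F j) (Set.Icc a b) x := by
      apply (hφ.differentiableOn_iteratedDerivWithin ?_ hune) x hxIcc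
      exact_mod_cast lt_top_iff_ne_top.2 (by simp)
    have h1 : HasDerivWithinAt (F j) (derivWithin (F j) (Set.Icc a b) x) (Set.Icc a b) x :=
      hdiff.hasDerivWithinAt
    have h2 : HasDerivAt (F j) (derivWithin (F j) (Set.Icc a b) x) x :=
      h1.hasDerivAt (Icc_mem_nhds hx.1 hx.2)
    have h3 : F (j+1) x = derivWithin (F j) (Set.Icc a b) x :=
      congrFun iteratedDerivWithin_succ x
    rwa [h3]
  have hF0 : F 0 = φ := iteratedDerivWithin_zero
  -- bounds
  obtain ⟨B₀', hB₀'⟩ := isCompact_Icc.exists_bound_of_continuousOn hφ.continuousOn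
  set B₀ : ℝ := max B₀' 0 with hB₀def
  have hB₀0 : 0 ≤ B₀ := le_max_right _ _
  have hB₀ : ∀ x ∈ Set.Icc a b, |φ x| ≤ B₀ := fun x hx => by
    calc |φ x| = ‖φ x‖ := (Real.norm_eq_abs _).symm
      _ ≤ B₀' := hB₀' x hx
      _ ≤ B₀ := le_max_left _ _
  obtain ⟨Bn', hBn'⟩ := isCompact_Icc.exists_bound_of_continuousOn (hcont n le_rfl)
  set Bn : ℝ := max Bn' 0 with hBndef
  have hBn0 : 0 ≤ Bn := le_max_right _ _
  have hBn : ∀ x ∈ Set.Icc a b, |F n x| ≤ Bn := fun x hx => by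
    calc |F n x| = ‖F n x‖ := (Real.norm_eq_abs _).symm
      _ ≤ Bn' := hBn' x hx
      _ ≤ Bn := le_max_left _ _
  -- Good implies bound on sup
  have hGoodBound : ∀ (C : Set ℝ) (δ : ℝ), 0 ≤ δ → SjGood a b φ n C δ →
      ∀ x ∈ C, |φ x| ≤ Bn * δ ^ n := by
    rintro C δ hδ ⟨u, v, huv, hlen, hsub, hCsub, z, hzm, hzmem, hz0⟩ x hx
    have h1 := sjolin_key a b n F hcont hderiv Bn hBn0 hBn u v hsub z hzm hzmem
      (by intro i; rw [hF0]; exact hz0 i) x (hCsub hx)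
    rw [hF0] at h1
    calc |φ x| ≤ (v - u) ^ n * Bn := h1
      _ ≤ δ ^ n * Bn := by
          apply mul_le_mul_of_nonneg_right _ hBn0
          exact pow_le_pow_left₀ (by linarith) hlen n
      _ = Bn * δ ^ n := mul_comm _ _
  -- component machinery
  have hS_Icc : S ⊆ Set.Icc a b := Set.diff_subset
  choose rep hrepS hrepC using
    fun c : {C : Set ℝ // ∃ x ∈ S, C = connectedComponentIn S x} => c.2
  have hrepmem : ∀ c : {C : Set ℝ // ∃ x ∈ S, C = connectedComponentIn S x}, rep c ∈ c.1 := fun c => by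
    rw [hrepC c]
    exact mem_connectedComponentIn (hrepS c)
  have hsubS : ∀ c : {C : Set ℝ // ∃ x ∈ S, C = connectedComponentIn S x}, c.1 ⊆ S := fun c => by
    rw [hrepC c]
    exact connectedComponentIn_subset _ _
  set M : {C : Set ℝ // ∃ x ∈ S, C = connectedComponentIn S x} → ℝ :=
    fun c => sSup ((fun x => |φ x|) '' c.1) with hM
  have himgbdd : ∀ c : {C : Set ℝ // ∃ x ∈ S, C = connectedComponentIn S x}, ∀ y ∈ (fun x => |φ x|) '' c.1, y ≤ B₀ := by
    rintro c y ⟨x, hx, rfl⟩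
    exact hB₀ x (hS_Icc (hsubS c hx))
  have hMbdd : ∀ c : {C : Set ℝ // ∃ x ∈ S, C = connectedComponentIn S x}, BddAbove ((fun x => |φ x|) '' c.1) :=
    fun c => ⟨B₀, fun y hy => himgbdd c y hy⟩
  have hMne : ∀ c : {C : Set ℝ // ∃ x ∈ S, C = connectedComponentIn S x}, ((fun x => |φ x|) '' c.1).Nonempty :=
    fun c => ⟨|φ (rep c)|, Set.mem_image_of_mem _ (hrepmem c)⟩
  have hMleB₀ : ∀ c, M c ≤ B₀ := fun c => csSup_le (hMne c) (himgbdd c)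
  have hMpos : ∀ c, 0 < M c := by
    intro c
    have h1 : |φ (rep c)| > 0 := abs_pos.2 (hrepS c).2
    exact lt_of_lt_of_le h1 (le_csSup (hMbdd c) (Set.mem_image_of_mem _ (hrepmem c)))
  have hMGood : ∀ c (δ : ℝ), 0 ≤ δ → SjGood a b φ n c.1 δ → M c ≤ Bn * δ ^ n := by
    intro c δ hδ hg
    apply csSup_le (hMne c)
    rintro y ⟨x, hx, rfl⟩
    exact hGoodBound _ δ hδ hg x hx
  -- bad scale exists
  have hEx : ∀ c : {C : Set ℝ // ∃ x ∈ S, C = connectedComponentIn S x}, ∃ j : ℕ, ¬ SjGood a b φ n c.1 ((b - a) * 2⁻¹ ^ j) := by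
    intro c
    by_contra hcon
    push_neg at hcon
    have hall : ∀ j : ℕ, M c ≤ (Bn * (b - a) ^ n) * ((2:ℝ)⁻¹ ^ n) ^ j := by
      intro j
      have h1 := hMGood c _ (mul_nonneg (by linarith) (by positivity)) (hcon j)
      calc M c ≤ Bn * ((b - a) * 2⁻¹ ^ j) ^ n := h1
        _ = (Bn * (b - a) ^ n) * ((2:ℝ)⁻¹ ^ n) ^ j := by
            rw [mul_pow, ← pow_mul, ← pow_mul, Nat.mul_comm j n]
            ring
    set A : ℝ := Bn * (b - a) ^ n with hA
    have hA0 : 0 ≤ A := mul_nonneg hBn0 (pow_nonneg (by linarith) n)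
    rcases eq_or_lt_of_le hA0 with hA0' | hA0'
    · have := hall 0
      rw [← hA0'] at this
      simp at this
      linarith [hMpos c]
    · obtain ⟨j, hj⟩ := exists_pow_lt_of_lt_one (div_pos (hMpos c) hA0')
        (show ((2:ℝ)⁻¹ ^ n) < 1 by
          apply pow_lt_one₀ (by norm_num) (by norm_num)
          have : (0:ℝ) < 2/ε := by positivity
          have := Nat.ceil_pos.2 this
          omega)
      have h2 := hall j
      rw [lt_div_iff₀ hA0'] at hj
      nlinarith
  set jf : _ → ℕ := fun c => Nat.find (hEx c) with hjf
  have hjfbad : ∀ c, ¬ SjGood a b φ n c.1 ((b - a) * 2⁻¹ ^ (jf c)) :=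
    fun c => Nat.find_spec (hEx c)
  have hjfgood : ∀ c j', jf c = j' + 1 → SjGood a b φ n c.1 ((b - a) * 2⁻¹ ^ j') := by
    intro c j' hj'
    have := Nat.find_min (hEx c) (show j' < jf c by omega)
    exact not_not.1 this
  -- weight bound
  set q : ℝ := (2:ℝ)⁻¹ ^ n with hq
  have hq0 : 0 ≤ q := by positivity
  set B₂ : ℝ := max B₀ (Bn * (2 * (b - a)) ^ n) with hB₂
  have hB₂0 : 0 ≤ B₂ := le_trans hB₀0 (le_max_left _ _)
  have hMW : ∀ c, M c ≤ B₂ * q ^ (jf c) := by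
    intro c
    rcases Nat.eq_zero_or_pos (jf c) with h0 | hpos
    · rw [h0, pow_zero, mul_one]
      exact (hMleB₀ c).trans (le_max_left _ _)
    · obtain ⟨j', hj'⟩ : ∃ j', jf c = j' + 1 := ⟨jf c - 1, by omega⟩
      have hg := hjfgood c j' hj'
      have h1 := hMGood c _ (mul_nonneg (by linarith) (by positivity)) hg
      calc M c ≤ Bn * ((b - a) * 2⁻¹ ^ j') ^ n := h1
        _ = (Bn * (2 * (b - a)) ^ n) * q ^ (j' + 1) := by
            rw [hq, ← pow_mul, mul_pow, mul_pow, ← pow_mul]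
            rw [show n * (j' + 1) = n + j' * n by ring, pow_add]
            have h4 : ((2:ℝ)) ^ n * (2:ℝ)⁻¹ ^ n = 1 := by
              rw [← mul_pow]
              norm_num
            linear_combination -((b - a) ^ n * Bn * (2:ℝ)⁻¹ ^ (n * j')) * h4
        _ ≤ B₂ * q ^ (j' + 1) :=
            mul_le_mul_of_nonneg_right (le_max_right _ _) (by positivity)
        _ = B₂ * q ^ (jf c) := by rw [hj']
  -- rpow comparisons
  have hεle := hε.le
  have hqε0 : 0 ≤ q ^ ε := Real.rpow_nonneg hq0 ε
  have hB₂ε0 : 0 ≤ B₂ ^ ε := Real.rpow_nonneg hB₂0 ε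
  have hMε : ∀ c, M c ^ ε ≤ B₂ ^ ε * (q ^ ε) ^ (jf c) := by
    intro c
    have h1 : M c ^ ε ≤ (B₂ * q ^ jf c) ^ ε :=
      Real.rpow_le_rpow (hMpos c).le (hMW c) hεle
    have h2 : (q ^ (jf c)) ^ ε = (q ^ ε) ^ (jf c) := by
      rw [← Real.rpow_natCast q (jf c), ← Real.rpow_natCast (q ^ ε) (jf c),
          ← Real.rpow_mul hq0, ← Real.rpow_mul hq0, mul_comm]
    rwa [Real.mul_rpow hB₂0 (pow_nonneg hq0 _), h2] at h1
  have hqε : q ^ ε ≤ 1/4 := by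
    have h1 : q ^ ε = (2:ℝ)⁻¹ ^ ((n:ℝ) * ε) := by
      rw [hq, ← Real.rpow_natCast (2:ℝ)⁻¹ n, ← Real.rpow_mul (by norm_num)]
    rw [h1]
    calc (2:ℝ)⁻¹ ^ ((n:ℝ)*ε) ≤ (2:ℝ)⁻¹ ^ (2:ℝ) :=
          Real.rpow_le_rpow_of_exponent_ge (by norm_num) (by norm_num) hn2
      _ = 1/4 := by
          rw [show (2:ℝ) = ((2:ℕ):ℝ) by norm_num, Real.rpow_natCast]
          norm_num
  -- counting at each scale
  have hcount : ∀ (j : ℕ) (G : Finset {C : Set ℝ // ∃ x ∈ S, C = connectedComponentIn S x}),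
      (∀ c ∈ G, jf c = j) → (G.card : ℝ) ≤ ((n:ℝ) + 2) * (4 * 2 ^ j) := by
    intro j G hG
    have hδ : (0:ℝ) < (b - a) * 2⁻¹ ^ j := mul_pos (by linarith) (by positivity)
    have hbad : ∀ c ∈ G, ¬ SjGood a b φ n (c : Set ℝ) ((b - a) * 2⁻¹ ^ j) := by
      intro c hc
      have := hjfbad c
      rwa [hG c hc] at this
    have h1 := sjolin_count a b φ n _ hδ S hSdef G hbad
    have h2 : ⌊3 * (b - a) / ((b - a) * 2⁻¹ ^ j)⌋₊ = 3 * 2 ^ j := by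
      have h3 : 3 * (b - a) / ((b - a) * 2⁻¹ ^ j) = ((3 * 2 ^ j : ℕ) : ℝ) := by
        push_cast
        rw [div_eq_iff (by positivity)]
        have h4 : ((2:ℝ)) ^ j * 2⁻¹ ^ j = 1 := by
          rw [← mul_pow]
          norm_num
        linear_combination (-(3 * (b - a))) * h4
      rw [h3, Nat.floor_natCast]
    rw [h2] at h1
    calc (G.card : ℝ) ≤ ((n + 2) * (3 * 2 ^ j + 1) : ℕ) := by exact_mod_cast h1
      _ = ((n:ℝ) + 2) * (3 * 2 ^ j + 1) := by push_cast; ring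
      _ ≤ ((n:ℝ) + 2) * (4 * 2 ^ j) := by
          have h5 : (1:ℝ) ≤ 2 ^ j := one_le_pow₀ (by norm_num)
          have h6 : (0:ℝ) ≤ (n:ℝ) + 2 := by positivity
          nlinarith
  -- final summability
  have hterm0 : ∀ j : ℕ, (0:ℝ) ≤ 4 * ((n:ℝ) + 2) * B₂ ^ ε * (1/2) ^ j := by
    intro j
    positivity
  apply summable_of_sum_le (c := 8 * ((n:ℝ) + 2) * B₂ ^ ε)
  · intro c
    exact Real.rpow_nonneg (hMpos c).le ε
  · intro u
    have hmaps : ∀ c ∈ u, jf c ∈ u.image jf := fun c hc => Finset.mem_image_of_mem jf hc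
    calc ∑ c ∈ u, M c ^ ε
        ≤ ∑ c ∈ u, B₂ ^ ε * (q ^ ε) ^ (jf c) := Finset.sum_le_sum fun c _ => hMε c
      _ = ∑ j ∈ u.image jf, ∑ c ∈ u.filter (fun c => jf c = j), B₂ ^ ε * (q ^ ε) ^ (jf c) :=
          (Finset.sum_fiberwise_of_maps_to hmaps _).symm
      _ ≤ ∑ j ∈ u.image jf, 4 * ((n:ℝ) + 2) * B₂ ^ ε * (1/2) ^ j := by
          apply Finset.sum_le_sum
          intro j hj
          have heq : ∑ c ∈ u.filter (fun c => jf c = j), B₂ ^ ε * (q ^ ε) ^ (jf c)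
              = (u.filter (fun c => jf c = j)).card * (B₂ ^ ε * (q ^ ε) ^ j) := by
            rw [Finset.sum_congr rfl (fun c hc => by
              rw [(Finset.mem_filter.1 hc).2]), Finset.sum_const, nsmul_eq_mul]
          rw [heq]
          have hcard := hcount j (u.filter (fun c => jf c = j))
            (fun c hc => (Finset.mem_filter.1 hc).2)
          have hqj : (q ^ ε) ^ j ≤ (1/4:ℝ) ^ j := pow_le_pow_left₀ hqε0 hqε j
          calc ((u.filter (fun c => jf c = j)).card : ℝ) * (B₂ ^ ε * (q ^ ε) ^ j)
              ≤ (((n:ℝ) + 2) * (4 * 2 ^ j)) * (B₂ ^ ε * (1/4) ^ j) := by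
                apply mul_le_mul hcard _ (by positivity) (by positivity)
                exact mul_le_mul_of_nonneg_left hqj hB₂ε0
            _ = 4 * ((n:ℝ) + 2) * B₂ ^ ε * ((2 * (1/4)) ^ j) := by
                rw [mul_pow]
                ring
            _ = 4 * ((n:ℝ) + 2) * B₂ ^ ε * (1/2) ^ j := by norm_num
      _ ≤ ∑ j ∈ Finset.range ((u.image jf).sup id + 1),
            4 * ((n:ℝ) + 2) * B₂ ^ ε * (1/2) ^ j := by
          apply Finset.sum_le_sum_of_subset_of_nonneg
          · intro j hj
            rw [Finset.mem_range, Nat.lt_succ_iff]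
            exact Finset.le_sup (f := id) hj
          · intro j _ _
            exact hterm0 j
      _ = 4 * ((n:ℝ) + 2) * B₂ ^ ε *
            ∑ j ∈ Finset.range ((u.image jf).sup id + 1), (1/2:ℝ) ^ j := by
          rw [Finset.mul_sum]
      _ ≤ 4 * ((n:ℝ) + 2) * B₂ ^ ε * 2 := by
          apply mul_le_mul_of_nonneg_left (sum_geometric_two_le _) (by positivity)
      _ = 8 * ((n:ℝ) + 2) * B₂ ^ ε := by ring


/-- Sjölin's theorem (Corollary 2.3): if `φ` is smooth on a compact interval `I = [a,b]`,
`E` is its zero set, and `{I_k}` are the connected components of `I \ E`, then for every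
`ε > 0` the series `∑_k (sup_{I_k} |φ|)^ε` converges. -/
theorem statement2 (a b : ℝ) (hab : a ≤ b) (φ : ℝ → ℝ)
    (hφ : ContDiffOn ℝ (⊤ : ℕ∞) φ (Set.Icc a b)) (ε : ℝ) (hε : 0 < ε) :
    Summable (fun Cc : {C : Set ℝ // ∃ x ∈ Set.Icc a b \ {y | φ y = 0},
        C = connectedComponentIn (Set.Icc a b \ {y | φ y = 0}) x} =>
      (sSup ((fun x => |φ x|) '' (Cc : Set ℝ))) ^ ε) := by
  rcases eq_or_lt_of_le hab with heq | hlt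
  · subst heq
    haveI hsub : Subsingleton {C : Set ℝ // ∃ x ∈ Set.Icc a a \ {y | φ y = 0},
        C = connectedComponentIn (Set.Icc a a \ {y | φ y = 0}) x} := by
      constructor
      rintro ⟨C, x, hx, rfl⟩ ⟨C', x', hx', rfl⟩
      have hxa : x = a := le_antisymm hx.1.2 hx.1.1
      have hxa' : x' = a := le_antisymm hx'.1.2 hx'.1.1
      subst hxa
      subst hxa'
      rfl
    exact Summable.of_finite
  · exact sjolin_main a b hlt φ hφ ε hε
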